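/- In the Heisenberg group H_3(ℝ) with the subFinsler metric d_3 induced by the ℓ¹ norm on the horizontal plane, if max{|x|,|y|}² − |xy|/2 ≤ |z|, then d_3(id,(x,y,z)) = 4·√(|z| + |xy|/2) − |x| − |y|. -/

import Mathlib

/-- The subFinsler (Carnot–Carathéodory) distance from the identity in the
Heisenberg group `H₃(ℝ)`, in exponential coordinates `(x,y,z)` with `[X,Y] = Z`,
associated to the ℓ¹ norm `|a| + |b|` on horizontal vectors `aX + bY`.
A horizontal path is encoded by coordinate functions `x y z : ℝ → ℝ` with
controls `u v` (the horizontal velocities), the constraint on `z` being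
`z' = (x v - y u)/2`, and its length is `∫ (|u| + |v|)`. -/
noncomputable def d3 : ℝ × ℝ × ℝ → ℝ := fun p =>
  sInf { L : ℝ | ∃ x y z u v : ℝ → ℝ,
    x 0 = 0 ∧ y 0 = 0 ∧ z 0 = 0 ∧
    x 1 = p.1 ∧ y 1 = p.2.1 ∧ z 1 = p.2.2 ∧
    ContinuousOn u (Set.Icc 0 1) ∧ ContinuousOn v (Set.Icc 0 1) ∧
    (∀ t ∈ Set.Icc (0:ℝ) 1, HasDerivAt x (u t) t ∧ HasDerivAt y (v t) t ∧
        HasDerivAt z ((x t * v t - y t * u t) / 2) t) ∧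
    L = ∫ t in (0:ℝ)..1, (|u t| + |v t|) }

/-- Group law of `H₃(ℝ)` in exponential coordinates:
`(x,y,z)·(x',y',z') = (x+x', y+y', z+z'+(xy'-yx')/2)`. -/
noncomputable def hMul (p q : ℝ × ℝ × ℝ) : ℝ × ℝ × ℝ :=
  (p.1 + q.1, p.2.1 + q.2.1, p.2.2 + q.2.2 + (p.1 * q.2.1 - p.2.1 * q.1) / 2)

/-- Inverse in `H₃(ℝ)` in exponential coordinates. -/
noncomputable def hInv (p : ℝ × ℝ × ℝ) : ℝ × ℝ × ℝ := (-p.1, -p.2.1, -p.2.2)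

/-- The left-invariant subFinsler distance `d₃` on `H₃(ℝ)`. -/
noncomputable def d3dist (p q : ℝ × ℝ × ℝ) : ℝ := d3 (hMul (hInv p) q)

open Set MeasureTheory

/-- The path set underlying `d3`. -/
def hSet (p : ℝ × ℝ × ℝ) : Set ℝ := { L : ℝ | ∃ x y z u v : ℝ → ℝ,
    x 0 = 0 ∧ y 0 = 0 ∧ z 0 = 0 ∧
    x 1 = p.1 ∧ y 1 = p.2.1 ∧ z 1 = p.2.2 ∧
    ContinuousOn u (Set.Icc 0 1) ∧ ContinuousOn v (Set.Icc 0 1) ∧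
    (∀ t ∈ Set.Icc (0:ℝ) 1, HasDerivAt x (u t) t ∧ HasDerivAt y (v t) t ∧
        HasDerivAt z ((x t * v t - y t * u t) / 2) t) ∧
    L = ∫ t in (0:ℝ)..1, (|u t| + |v t|) }

lemma d3_hSet (p : ℝ × ℝ × ℝ) : d3 p = sInf (hSet p) := rfl

noncomputable def pw (b1 b2 b3 b4 : ℝ → ℝ) : ℝ → ℝ := fun t =>
  if t ≤ 1/4 then b1 t else if t ≤ 1/2 then b2 t else if t ≤ 3/4 then b3 t else b4 t



lemma glue_hasDerivAt {f g f' g' : ℝ → ℝ} (a : ℝ)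
    (hf : ∀ t, HasDerivAt f (f' t) t) (hg : ∀ t, HasDerivAt g (g' t) t)
    (hv : f a = g a) (hd : f' a = g' a) (t : ℝ) :
    HasDerivAt (fun s => if s ≤ a then f s else g s)
      ((fun s => if s ≤ a then f' s else g' s) t) t := by
  rcases lt_trichotomy t a with h | rfl | h
  · simp only [if_pos h.le]
    apply (hf t).congr_of_eventuallyEq
    filter_upwards [Iio_mem_nhds h] with s hs
    have hsa : s < a := hs
    simp [hsa.le]
  · simp only [if_pos le_rfl]
    have h1 : HasDerivWithinAt (fun s => if s ≤ t then f s else g s) (f' t) (Set.Iic t) t := by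
      apply (hf t).hasDerivWithinAt.congr
      · intro s hs
        have hst : s ≤ t := hs
        simp [hst]
      · simp
    have h2 : HasDerivWithinAt (fun s => if s ≤ t then f s else g s) (f' t) (Set.Ici t) t := by
      rw [hd]
      apply (hg t).hasDerivWithinAt.congr
      · intro s hs
        have hts : t ≤ s := hs
        rcases eq_or_lt_of_le hts with rfl | hlt
        · simp [hv]
        · simp [not_le.mpr hlt, hv]
      · simp [hv]
    have h3 := h1.union h2
    rw [Set.Iic_union_Ici] at h3
    exact (hasDerivWithinAt_univ).mp h3
  · simp only [if_neg (not_le.mpr h)]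
    apply (hg t).congr_of_eventuallyEq
    filter_upwards [Ioi_mem_nhds h] with s hs
    have has : a < s := hs
    simp [not_le.mpr has]

lemma glue_continuous {f g : ℝ → ℝ} (a : ℝ) (hf : Continuous f) (hg : Continuous g)
    (hv : f a = g a) : Continuous (fun s => if s ≤ a then f s else g s) :=
  Continuous.if_le hf hg continuous_id continuous_const (fun s hs => by rw [hs]; exact hv)

noncomputable def prof (t : ℝ) : ℝ := (1 - Real.cos (Real.pi * t)) / 2
noncomputable def prof' (t : ℝ) : ℝ := Real.pi * Real.sin (Real.pi * t) / 2

lemma prof_hasDeriv (t : ℝ) : HasDerivAt prof (prof' t) t := by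
  have h1 : HasDerivAt (fun t : ℝ => Real.pi * t) (Real.pi) t := by
    simpa using (hasDerivAt_id t).const_mul Real.pi
  have h2 := (Real.hasDerivAt_cos (Real.pi * t)).comp t h1
  have h3 := ((hasDerivAt_const t (1:ℝ)).sub h2).div_const 2
  refine h3.congr_deriv ?_
  unfold prof'; ring

lemma prof_zero : prof 0 = 0 := by simp [prof]
lemma prof_one : prof 1 = 1 := by simp [prof]
lemma prof'_zero : prof' 0 = 0 := by simp [prof']
lemma prof'_one : prof' 1 = 0 := by simp [prof']
lemma prof'_nonneg {t : ℝ} (h0 : 0 ≤ t) (h1 : t ≤ 1) : 0 ≤ prof' t := by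
  have : 0 ≤ Real.sin (Real.pi * t) := by
    apply Real.sin_nonneg_of_nonneg_of_le_pi
    · positivity
    · nlinarith [Real.pi_pos]
  unfold prof'
  positivity

lemma prof_continuous : Continuous prof := by
  unfold prof; fun_prop

lemma prof'_continuous : Continuous prof' := by
  unfold prof'; fun_prop

/-- Derivative of an affine-in-prof branch. -/
lemma branch_hasDeriv (c d m b : ℝ) (t : ℝ) :
    HasDerivAt (fun t => c + d * prof (m * t + b)) (d * m * prof' (m * t + b)) t := by
  have h1 : HasDerivAt (fun t : ℝ => m * t + b) m t := by
    simpa using ((hasDerivAt_id t).const_mul m).add_const b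
  have h2 := ((prof_hasDeriv (m * t + b)).comp t h1).const_mul d
  have h3 := h2.const_add c
  refine h3.congr_deriv ?_
  ring

/-- FTC for a branch on an interval. -/
lemma branch_integral (c d m b : ℝ) (p q : ℝ)
    (hInt : IntervalIntegrable (fun t => d * m * prof' (m * t + b)) MeasureTheory.volume p q) :
    ∫ t in p..q, d * m * prof' (m * t + b)
      = (c + d * prof (m * q + b)) - (c + d * prof (m * p + b)) :=
  intervalIntegral.integral_eq_sub_of_hasDerivAt (fun t _ => branch_hasDeriv c d m b t) hInt

lemma pw_zero (b1 b2 b3 b4 : ℝ → ℝ) : pw b1 b2 b3 b4 0 = b1 0 := by norm_num [pw]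
lemma pw_one (b1 b2 b3 b4 : ℝ → ℝ) : pw b1 b2 b3 b4 1 = b4 1 := by norm_num [pw]

lemma pw_hasDerivAt {b1 b2 b3 b4 e1 e2 e3 e4 : ℝ → ℝ}
    (h1 : ∀ t, HasDerivAt b1 (e1 t) t) (h2 : ∀ t, HasDerivAt b2 (e2 t) t)
    (h3 : ∀ t, HasDerivAt b3 (e3 t) t) (h4 : ∀ t, HasDerivAt b4 (e4 t) t)
    (v12 : b1 (1/4) = b2 (1/4)) (v23 : b2 (1/2) = b3 (1/2)) (v34 : b3 (3/4) = b4 (3/4))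
    (w12 : e1 (1/4) = e2 (1/4)) (w23 : e2 (1/2) = e3 (1/2)) (w34 : e3 (3/4) = e4 (3/4)) :
    ∀ t, HasDerivAt (pw b1 b2 b3 b4) (pw e1 e2 e3 e4 t) t := by
  intro t
  have g34 := glue_hasDerivAt (3/4 : ℝ) h3 h4 v34 w34
  have g234 := glue_hasDerivAt (1/2 : ℝ) h2 g34 (by norm_num [v23]) (by norm_num [w23])
  have g1234 := glue_hasDerivAt (1/4 : ℝ) h1 g234 (by norm_num [v12]) (by norm_num [w12]) t
  exact g1234

lemma pw_continuous {b1 b2 b3 b4 : ℝ → ℝ}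
    (h1 : Continuous b1) (h2 : Continuous b2) (h3 : Continuous b3) (h4 : Continuous b4)
    (v12 : b1 (1/4) = b2 (1/4)) (v23 : b2 (1/2) = b3 (1/2)) (v34 : b3 (3/4) = b4 (3/4)) :
    Continuous (pw b1 b2 b3 b4) := by
  have g34 := glue_continuous (3/4 : ℝ) h3 h4 v34
  have g234 := glue_continuous (1/2 : ℝ) h2 g34 (by norm_num [v23])
  exact glue_continuous (1/4 : ℝ) h1 g234 (by norm_num [v12])

lemma pw_eqOn1 (b1 b2 b3 b4 : ℝ → ℝ) : Set.EqOn (pw b1 b2 b3 b4) b1 (Set.uIcc 0 (1/4)) := by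
  intro t ht
  rw [Set.uIcc_of_le (by norm_num)] at ht
  simp only [pw, if_pos ht.2]

lemma pw_eqOn2 (b1 b2 b3 b4 : ℝ → ℝ) (h : b1 (1/4) = b2 (1/4)) :
    Set.EqOn (pw b1 b2 b3 b4) b2 (Set.uIcc (1/4) (1/2)) := by
  intro t ht
  rw [Set.uIcc_of_le (by norm_num)] at ht
  rcases eq_or_lt_of_le ht.1 with heq | hlt
  · simp only [pw, ← heq, if_pos le_rfl]
    exact h
  · simp only [pw, if_neg (not_le.mpr hlt), if_pos ht.2]

lemma pw_eqOn3 (b1 b2 b3 b4 : ℝ → ℝ) (h : b2 (1/2) = b3 (1/2)) :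
    Set.EqOn (pw b1 b2 b3 b4) b3 (Set.uIcc (1/2) (3/4)) := by
  intro t ht
  rw [Set.uIcc_of_le (by norm_num)] at ht
  rcases eq_or_lt_of_le ht.1 with heq | hlt
  · rw [← heq]
    have : ¬ ((1:ℝ)/2 ≤ 1/4) := by norm_num
    simp only [pw, if_neg this, if_pos le_rfl]
    exact h
  · have ha : ¬ (t ≤ 1/4) := by intro hc; linarith
    have hb : ¬ (t ≤ 1/2) := not_le.mpr hlt
    simp only [pw, if_neg ha, if_neg hb, if_pos ht.2]

lemma pw_eqOn4 (b1 b2 b3 b4 : ℝ → ℝ) (h : b3 (3/4) = b4 (3/4)) :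
    Set.EqOn (pw b1 b2 b3 b4) b4 (Set.uIcc (3/4) 1) := by
  intro t ht
  rw [Set.uIcc_of_le (by norm_num)] at ht
  rcases eq_or_lt_of_le ht.1 with heq | hlt
  · rw [← heq]
    have h1 : ¬ ((3:ℝ)/4 ≤ 1/4) := by norm_num
    have h2 : ¬ ((3:ℝ)/4 ≤ 1/2) := by norm_num
    simp only [pw, if_neg h1, if_neg h2, if_pos le_rfl]
    exact h
  · have ha : ¬ (t ≤ 1/4) := by intro hc; linarith
    have hb : ¬ (t ≤ 1/2) := by intro hc; linarith
    have hc : ¬ (t ≤ 3/4) := not_le.mpr hlt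
    simp only [pw, if_neg ha, if_neg hb, if_neg hc]

noncomputable def br (c d b : ℝ) : ℝ → ℝ := fun t => c + d * prof (4 * t + b)
noncomputable def br' (d b : ℝ) : ℝ → ℝ := fun t => d * 4 * prof' (4 * t + b)

lemma br_hasDeriv (c d b : ℝ) : ∀ t, HasDerivAt (br c d b) (br' d b t) t :=
  fun t => branch_hasDeriv c d 4 b t

lemma br'_continuous (d b : ℝ) : Continuous (br' d b) := by
  unfold br'
  have : Continuous (fun t : ℝ => 4 * t + b) :=
    (continuous_const.mul continuous_id).add continuous_const
  exact continuous_const.mul (prof'_continuous.comp this)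

lemma br'_intInt (d b : ℝ) (p q : ℝ) : IntervalIntegrable (br' d b) MeasureTheory.volume p q :=
  (br'_continuous d b).intervalIntegrable p q

lemma br_integral (c d b : ℝ) (p q : ℝ) :
    ∫ t in p..q, br' d b t = br c d b q - br c d b p :=
  intervalIntegral.integral_eq_sub_of_hasDerivAt (fun t _ => br_hasDeriv c d b t) (br'_intInt d b p q)

/-- on quarter interval where 4t+b runs over [0,1], integral of |br'| is |d| -/
lemma abs_br_integral (d b p q : ℝ) (hp : 4 * p + b = 0) (hq : 4 * q + b = 1) :
    ∫ t in p..q, |br' d b t| = |d| := by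
  have hpq : p ≤ q := by linarith
  have h1 : Set.EqOn (fun t => |br' d b t|) (br' |d| b) (Set.uIcc p q) := by
    intro t ht
    rw [Set.uIcc_of_le hpq] at ht
    have h0 : 0 ≤ 4 * t + b := by have := ht.1; linarith
    have h1' : 4 * t + b ≤ 1 := by have := ht.2; linarith
    have hp := prof'_nonneg h0 h1'
    simp only [br', abs_mul]
    rw [abs_of_nonneg hp]
    norm_num
  rw [intervalIntegral.integral_congr h1, br_integral 0 |d| b]
  simp only [br, hp, hq, prof_one, prof_zero]
  ring

lemma mem_hSet_core (x y z s : ℝ) (hx : 0 ≤ x) (hy : 0 ≤ y) (hs0 : 0 ≤ s)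
    (hs2 : s ^ 2 = z + x * y / 2) (hsx : x ≤ s) (hsy : y ≤ s) :
    (4 * s - x - y) ∈ hSet (x, y, z) := by
  refine ⟨pw (br 0 0 0) (br 0 s (-1)) (br s 0 (-2)) (br s (x-s) (-3)),
      pw (br 0 (y-s) 0) (br (y-s) 0 (-1)) (br (y-s) s (-2)) (br y 0 (-3)),
      pw (br 0 0 0) (br 0 (-((y-s)*s/2)) (-1)) (br (s*(s-y)/2) (s^2/2) (-2))
        (br (s*(s-y)/2 + s^2/2) (-(y*(x-s)/2)) (-3)),
      pw (br' 0 0) (br' s (-1)) (br' 0 (-2)) (br' (x-s) (-3)),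
      pw (br' (y-s) 0) (br' 0 (-1)) (br' s (-2)) (br' 0 (-3)),
      ?_, ?_, ?_, ?_, ?_, ?_, ?_, ?_, ?_, ?_⟩
  · rw [pw_zero]; norm_num [br, prof_zero]
  · rw [pw_zero]; norm_num [br, prof_zero]
  · rw [pw_zero]; norm_num [br, prof_zero]
  · rw [pw_one]; norm_num [br, prof_one]
  · rw [pw_one]; norm_num [br, prof_one]
  · rw [pw_one]; norm_num [br, prof_one]; linear_combination hs2
  · exact (pw_continuous (br'_continuous 0 0) (br'_continuous s (-1)) (br'_continuous 0 (-2))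
      (br'_continuous (x-s) (-3))
      (by norm_num [br', prof'_zero, prof'_one])
      (by norm_num [br', prof'_zero, prof'_one])
      (by norm_num [br', prof'_zero, prof'_one])).continuousOn
  · exact (pw_continuous (br'_continuous (y-s) 0) (br'_continuous 0 (-1)) (br'_continuous s (-2))
      (br'_continuous 0 (-3))
      (by norm_num [br', prof'_zero, prof'_one])
      (by norm_num [br', prof'_zero, prof'_one])
      (by norm_num [br', prof'_zero, prof'_one])).continuousOn
  · intro t ht
    refine ⟨?_, ?_, ?_⟩
    · exact pw_hasDerivAt (br_hasDeriv 0 0 0) (br_hasDeriv 0 s (-1)) (br_hasDeriv s 0 (-2))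
        (br_hasDeriv s (x-s) (-3))
        (by norm_num [br, prof_zero, prof_one]) (by norm_num [br, prof_zero, prof_one])
        (by norm_num [br, prof_zero, prof_one])
        (by norm_num [br', prof'_zero, prof'_one]) (by norm_num [br', prof'_zero, prof'_one])
        (by norm_num [br', prof'_zero, prof'_one]) t
    · exact pw_hasDerivAt (br_hasDeriv 0 (y-s) 0) (br_hasDeriv (y-s) 0 (-1))
        (br_hasDeriv (y-s) s (-2)) (br_hasDeriv y 0 (-3))
        (by norm_num [br, prof_zero, prof_one]) (by norm_num [br, prof_zero, prof_one])
        (by norm_num [br, prof_zero, prof_one])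
        (by norm_num [br', prof'_zero, prof'_one]) (by norm_num [br', prof'_zero, prof'_one])
        (by norm_num [br', prof'_zero, prof'_one]) t
    · have hz := pw_hasDerivAt (br_hasDeriv 0 0 0) (br_hasDeriv 0 (-((y-s)*s/2)) (-1))
        (br_hasDeriv (s*(s-y)/2) (s^2/2) (-2)) (br_hasDeriv (s*(s-y)/2 + s^2/2) (-(y*(x-s)/2)) (-3))
        (by norm_num [br, prof_zero, prof_one]) (by norm_num [br, prof_zero, prof_one]; ring)
        (by norm_num [br, prof_zero, prof_one])
        (by norm_num [br', prof'_zero, prof'_one]) (by norm_num [br', prof'_zero, prof'_one])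
        (by norm_num [br', prof'_zero, prof'_one]) t
      convert hz using 1
      simp only [pw, br, br']
      split_ifs <;> ring
  · -- the length integral
    have hUc : Continuous (pw (br' 0 0) (br' s (-1)) (br' 0 (-2)) (br' (x-s) (-3))) :=
      pw_continuous (br'_continuous 0 0) (br'_continuous s (-1)) (br'_continuous 0 (-2))
        (br'_continuous (x-s) (-3))
        (by norm_num [br', prof'_zero, prof'_one])
        (by norm_num [br', prof'_zero, prof'_one])
        (by norm_num [br', prof'_zero, prof'_one])
    have hVc : Continuous (pw (br' (y-s) 0) (br' 0 (-1)) (br' s (-2)) (br' 0 (-3))) :=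
      pw_continuous (br'_continuous (y-s) 0) (br'_continuous 0 (-1)) (br'_continuous s (-2))
        (br'_continuous 0 (-3))
        (by norm_num [br', prof'_zero, prof'_one])
        (by norm_num [br', prof'_zero, prof'_one])
        (by norm_num [br', prof'_zero, prof'_one])
    have hsplit : ∀ (f : ℝ → ℝ), Continuous f → ∫ t in (0:ℝ)..1, |f t| =
        (∫ t in (0:ℝ)..(1/4), |f t|) + ((∫ t in (1/4:ℝ)..(1/2), |f t|) +
        ((∫ t in (1/2:ℝ)..(3/4), |f t|) + (∫ t in (3/4:ℝ)..1, |f t|))) := by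
      intro f hf
      have h := fun a b => (hf.abs).intervalIntegrable (μ := MeasureTheory.volume) a b
      rw [intervalIntegral.integral_add_adjacent_intervals (h (1/2) (3/4)) (h (3/4) 1),
          intervalIntegral.integral_add_adjacent_intervals (h (1/4) (1/2)) (h (1/2) 1),
          intervalIntegral.integral_add_adjacent_intervals (h 0 (1/4)) (h (1/4) 1)]
    have hU1 : ∫ t in (0:ℝ)..(1/4), |pw (br' 0 0) (br' s (-1)) (br' 0 (-2)) (br' (x-s) (-3)) t|
        = 0 := by
      rw [intervalIntegral.integral_congr
        (fun t ht => congrArg abs (pw_eqOn1 (br' 0 0) (br' s (-1)) (br' 0 (-2)) (br' (x-s) (-3)) ht))]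
      rw [abs_br_integral 0 0 0 (1/4) (by norm_num) (by norm_num)]
      norm_num
    have hU2 : ∫ t in (1/4:ℝ)..(1/2), |pw (br' 0 0) (br' s (-1)) (br' 0 (-2)) (br' (x-s) (-3)) t|
        = s := by
      rw [intervalIntegral.integral_congr
        (fun t ht => congrArg abs (pw_eqOn2 (br' 0 0) (br' s (-1)) (br' 0 (-2)) (br' (x-s) (-3))
          (by norm_num [br', prof'_zero, prof'_one]) ht))]
      rw [abs_br_integral s (-1) (1/4) (1/2) (by norm_num) (by norm_num)]
      exact abs_of_nonneg hs0
    have hU3 : ∫ t in (1/2:ℝ)..(3/4), |pw (br' 0 0) (br' s (-1)) (br' 0 (-2)) (br' (x-s) (-3)) t|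
        = 0 := by
      rw [intervalIntegral.integral_congr
        (fun t ht => congrArg abs (pw_eqOn3 (br' 0 0) (br' s (-1)) (br' 0 (-2)) (br' (x-s) (-3))
          (by norm_num [br', prof'_zero, prof'_one]) ht))]
      rw [abs_br_integral 0 (-2) (1/2) (3/4) (by norm_num) (by norm_num)]
      norm_num
    have hU4 : ∫ t in (3/4:ℝ)..1, |pw (br' 0 0) (br' s (-1)) (br' 0 (-2)) (br' (x-s) (-3)) t|
        = s - x := by
      rw [intervalIntegral.integral_congr
        (fun t ht => congrArg abs (pw_eqOn4 (br' 0 0) (br' s (-1)) (br' 0 (-2)) (br' (x-s) (-3))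
          (by norm_num [br', prof'_zero, prof'_one]) ht))]
      rw [abs_br_integral (x-s) (-3) (3/4) 1 (by norm_num) (by norm_num)]
      rw [abs_of_nonpos (by linarith)]; ring
    have hV1 : ∫ t in (0:ℝ)..(1/4), |pw (br' (y-s) 0) (br' 0 (-1)) (br' s (-2)) (br' 0 (-3)) t|
        = s - y := by
      rw [intervalIntegral.integral_congr
        (fun t ht => congrArg abs (pw_eqOn1 (br' (y-s) 0) (br' 0 (-1)) (br' s (-2)) (br' 0 (-3)) ht))]
      rw [abs_br_integral (y-s) 0 0 (1/4) (by norm_num) (by norm_num)]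
      rw [abs_of_nonpos (by linarith)]; ring
    have hV2 : ∫ t in (1/4:ℝ)..(1/2), |pw (br' (y-s) 0) (br' 0 (-1)) (br' s (-2)) (br' 0 (-3)) t|
        = 0 := by
      rw [intervalIntegral.integral_congr
        (fun t ht => congrArg abs (pw_eqOn2 (br' (y-s) 0) (br' 0 (-1)) (br' s (-2)) (br' 0 (-3))
          (by norm_num [br', prof'_zero, prof'_one]) ht))]
      rw [abs_br_integral 0 (-1) (1/4) (1/2) (by norm_num) (by norm_num)]
      norm_num
    have hV3 : ∫ t in (1/2:ℝ)..(3/4), |pw (br' (y-s) 0) (br' 0 (-1)) (br' s (-2)) (br' 0 (-3)) t|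
        = s := by
      rw [intervalIntegral.integral_congr
        (fun t ht => congrArg abs (pw_eqOn3 (br' (y-s) 0) (br' 0 (-1)) (br' s (-2)) (br' 0 (-3))
          (by norm_num [br', prof'_zero, prof'_one]) ht))]
      rw [abs_br_integral s (-2) (1/2) (3/4) (by norm_num) (by norm_num)]
      exact abs_of_nonneg hs0
    have hV4 : ∫ t in (3/4:ℝ)..1, |pw (br' (y-s) 0) (br' 0 (-1)) (br' s (-2)) (br' 0 (-3)) t|
        = 0 := by
      rw [intervalIntegral.integral_congr
        (fun t ht => congrArg abs (pw_eqOn4 (br' (y-s) 0) (br' 0 (-1)) (br' s (-2)) (br' 0 (-3))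
          (by norm_num [br', prof'_zero, prof'_one]) ht))]
      rw [abs_br_integral 0 (-3) (3/4) 1 (by norm_num) (by norm_num)]
      norm_num
    rw [intervalIntegral.integral_add ((hUc.abs).intervalIntegrable _ _)
      ((hVc.abs).intervalIntegrable _ _)]
    rw [hsplit _ hUc, hsplit _ hVc, hU1, hU2, hU3, hU4, hV1, hV2, hV3, hV4]
    ring

lemma abs_add_abs_le_max (a b : ℝ) : |a| + |b| ≤ max |a + b| |a - b| := by
  rcases le_total 0 a with ha | ha <;> rcases le_total 0 b with hb | hb
  · apply le_max_of_le_left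
    rw [abs_of_nonneg ha, abs_of_nonneg hb]
    exact le_abs_self _
  · apply le_max_of_le_right
    rw [abs_of_nonneg ha, abs_of_nonpos hb]
    have := le_abs_self (a - b); linarith
  · apply le_max_of_le_right
    rw [abs_of_nonpos ha, abs_of_nonneg hb]
    have := neg_le_abs (a - b); linarith
  · apply le_max_of_le_left
    rw [abs_of_nonpos ha, abs_of_nonpos hb]
    have := neg_le_abs (a + b); linarith

lemma length_lower_bound (x y z u v : ℝ → ℝ)
    (hx0 : x 0 = 0) (hy0 : y 0 = 0) (hz0 : z 0 = 0)
    (hu : ContinuousOn u (Set.Icc 0 1)) (hv : ContinuousOn v (Set.Icc 0 1))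
    (hder : ∀ t ∈ Set.Icc (0:ℝ) 1, HasDerivAt x (u t) t ∧ HasDerivAt y (v t) t ∧
        HasDerivAt z ((x t * v t - y t * u t) / 2) t) :
    4 * Real.sqrt (|z 1| + |x 1 * y 1| / 2) - |x 1| - |y 1|
      ≤ ∫ t in (0:ℝ)..1, (|u t| + |v t|) := by
  have h01 : (0:ℝ) ≤ 1 := by norm_num
  have huIcc : Set.uIcc (0:ℝ) 1 = Set.Icc 0 1 := Set.uIcc_of_le h01
  have h0mem : (0:ℝ) ∈ Set.Icc (0:ℝ) 1 := by norm_num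
  have h1mem : (1:ℝ) ∈ Set.Icc (0:ℝ) 1 := by norm_num
  have hsub : ∀ a b : ℝ, a ∈ Set.Icc (0:ℝ) 1 → b ∈ Set.Icc (0:ℝ) 1 →
      Set.uIcc a b ⊆ Set.Icc (0:ℝ) 1 := by
    intro a b ha hb
    rw [← huIcc]
    exact Set.uIcc_subset_uIcc (by rwa [huIcc]) (by rwa [huIcc])
  have hxc : ContinuousOn x (Set.Icc 0 1) :=
    fun t ht => ((hder t ht).1.continuousAt).continuousWithinAt
  have hyc : ContinuousOn y (Set.Icc 0 1) :=
    fun t ht => ((hder t ht).2.1.continuousAt).continuousWithinAt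
  -- FTC helper
  have hftc : ∀ (f g : ℝ → ℝ), ContinuousOn g (Set.Icc 0 1) →
      (∀ t ∈ Set.Icc (0:ℝ) 1, HasDerivAt f (g t) t) →
      ∀ a b : ℝ, a ∈ Set.Icc (0:ℝ) 1 → b ∈ Set.Icc (0:ℝ) 1 →
      ∫ t in a..b, g t = f b - f a := by
    intro f g hg hf a b ha hb
    exact intervalIntegral.integral_eq_sub_of_hasDerivAt
      (fun t ht => hf t (hsub a b ha hb ht))
      ((hg.mono (hsub a b ha hb)).intervalIntegrable)
  -- integrability
  have hu_int : ∀ a b : ℝ, a ∈ Set.Icc (0:ℝ) 1 → b ∈ Set.Icc (0:ℝ) 1 →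
      IntervalIntegrable (fun t => |u t|) volume a b :=
    fun a b ha hb => ((hu.abs).mono (hsub a b ha hb)).intervalIntegrable
  have hv_int : ∀ a b : ℝ, a ∈ Set.Icc (0:ℝ) 1 → b ∈ Set.Icc (0:ℝ) 1 →
      IntervalIntegrable (fun t => |v t|) volume a b :=
    fun a b ha hb => ((hv.abs).mono (hsub a b ha hb)).intervalIntegrable
  -- variation bound
  have hvar : ∀ a b : ℝ, a ∈ Set.Icc (0:ℝ) 1 → b ∈ Set.Icc (0:ℝ) 1 → a ≤ b →
      |x b - x a| ≤ ∫ t in a..b, |u t| := by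
    intro a b ha hb hab
    rw [← hftc x u hu (fun t ht => (hder t ht).1) a b ha hb]
    exact intervalIntegral.abs_integral_le_integral_abs hab
  -- extrema of x
  obtain ⟨tM, htM, hMax⟩ := (isCompact_Icc).exists_isMaxOn
    (Set.nonempty_Icc.mpr h01) hxc
  obtain ⟨tm, htm, hMin⟩ := (isCompact_Icc).exists_isMinOn
    (Set.nonempty_Icc.mpr h01) hxc
  have hMax' : ∀ t ∈ Set.Icc (0:ℝ) 1, x t ≤ x tM := fun t ht => isMaxOn_iff.mp hMax t ht
  have hMin' : ∀ t ∈ Set.Icc (0:ℝ) 1, x tm ≤ x t := fun t ht => isMinOn_iff.mp hMin t ht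
  set M := x tM with hM
  set m := x tm with hm
  have hm0 : m ≤ 0 := by have := hMin' 0 h0mem; rwa [hx0] at this
  have hM0 : 0 ≤ M := by have := hMax' 0 h0mem; rwa [hx0] at this
  have hmM : m ≤ M := le_trans hm0 hM0
  have hmx1 : m ≤ x 1 := hMin' 1 h1mem
  have hMx1 : x 1 ≤ M := hMax' 1 h1mem
  set X := ∫ t in (0:ℝ)..1, |u t| with hX
  set Y := ∫ t in (0:ℝ)..1, |v t| with hY
  have hXnn : 0 ≤ X := intervalIntegral.integral_nonneg h01 (fun t _ => abs_nonneg _)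
  have hYnn : 0 ≤ Y := intervalIntegral.integral_nonneg h01 (fun t _ => abs_nonneg _)
  -- key oscillation bound : M - m ≤ (X + |x 1|)/2
  have key1 : M - m ≤ (X + |x 1|) / 2 := by
    rcases le_total tm tM with hc | hc
    · have e1 : (∫ t in (0:ℝ)..tm, |u t|) + (∫ t in tm..tM, |u t|) = ∫ t in (0:ℝ)..tM, |u t| :=
        intervalIntegral.integral_add_adjacent_intervals (hu_int 0 tm h0mem htm) (hu_int tm tM htm htM)
      have e2 : (∫ t in (0:ℝ)..tM, |u t|) + (∫ t in tM..(1:ℝ), |u t|) = X :=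
        intervalIntegral.integral_add_adjacent_intervals (hu_int 0 tM h0mem htM) (hu_int tM 1 htM h1mem)
      have b1 := hvar 0 tm h0mem htm htm.1
      have b2 := hvar tm tM htm htM hc
      have b3 := hvar tM 1 htM h1mem htM.2
      rw [hx0] at b1
      have la1 : -(x tm - 0) ≤ |x tm - 0| := neg_le_abs _
      have la2 : x tM - x tm ≤ |x tM - x tm| := le_abs_self _
      have la3 : -(x 1 - x tM) ≤ |x 1 - x tM| := neg_le_abs _
      have la4 : x 1 ≤ |x 1| := le_abs_self _
      linarith [hM, hm]
    · have e1 : (∫ t in (0:ℝ)..tM, |u t|) + (∫ t in tM..tm, |u t|) = ∫ t in (0:ℝ)..tm, |u t| :=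
        intervalIntegral.integral_add_adjacent_intervals (hu_int 0 tM h0mem htM) (hu_int tM tm htM htm)
      have e2 : (∫ t in (0:ℝ)..tm, |u t|) + (∫ t in tm..(1:ℝ), |u t|) = X :=
        intervalIntegral.integral_add_adjacent_intervals (hu_int 0 tm h0mem htm) (hu_int tm 1 htm h1mem)
      have b1 := hvar 0 tM h0mem htM htM.1
      have b2 := hvar tM tm htM htm hc
      have b3 := hvar tm 1 htm h1mem htm.2
      rw [hx0] at b1
      have la1 : x tM - 0 ≤ |x tM - 0| := le_abs_self _
      have la2 : -(x tm - x tM) ≤ |x tm - x tM| := neg_le_abs _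
      have la3 : x 1 - x tm ≤ |x 1 - x tm| := le_abs_self _
      have la4 : -(x 1) ≤ |x 1| := neg_le_abs _
      linarith [hM, hm]
  set c := (M + m) / 2 with hc
  -- integrability of products
  have hxv_int : IntervalIntegrable (fun t => x t * v t) volume 0 1 := by
    apply ContinuousOn.intervalIntegrable; rw [huIcc]; exact hxc.mul hv
  have hyu_int : IntervalIntegrable (fun t => y t * u t) volume 0 1 := by
    apply ContinuousOn.intervalIntegrable; rw [huIcc]; exact hyc.mul hu
  have hv_int01 : IntervalIntegrable v volume 0 1 := by
    apply ContinuousOn.intervalIntegrable; rw [huIcc]; exact hv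
  have hyint : ∫ t in (0:ℝ)..1, v t = y 1 := by
    rw [hftc y v hv (fun t ht => (hder t ht).2.1) 0 1 h0mem h1mem, hy0, sub_zero]
  set P := ∫ t in (0:ℝ)..1, x t * v t with hP
  -- the two closure bounds
  have key2 : ∀ e : ℝ, |c - e| ≤ (M - m)/2 →
      |P - e * y 1| ≤ (M - m)/2 * (Y + |y 1|) := by
    intro e he
    have hsplit : P - e * y 1 = (∫ t in (0:ℝ)..1, (x t - c) * v t) + (c - e) * y 1 := by
      have : ∫ t in (0:ℝ)..1, (x t - c) * v t
          = P - c * y 1 := by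
        have hcv : ∀ t, (x t - c) * v t = x t * v t - c * v t := fun t => by ring
        simp only [hcv]
        rw [intervalIntegral.integral_sub hxv_int (hv_int01.const_mul c),
          intervalIntegral.integral_const_mul, hyint]
      rw [this]; ring
    rw [hsplit]
    have h1 : |∫ t in (0:ℝ)..1, (x t - c) * v t| ≤ (M - m)/2 * Y := by
      calc |∫ t in (0:ℝ)..1, (x t - c) * v t| ≤ ∫ t in (0:ℝ)..1, |(x t - c) * v t| :=
            intervalIntegral.abs_integral_le_integral_abs h01
        _ ≤ ∫ t in (0:ℝ)..1, (M - m)/2 * |v t| := by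
            apply intervalIntegral.integral_mono_on h01
            · apply ContinuousOn.intervalIntegrable; rw [huIcc]
              exact ((hxc.sub continuousOn_const).mul hv).abs
            · exact (hv_int 0 1 h0mem h1mem).const_mul _
            · intro t ht
              rw [abs_mul]
              apply mul_le_mul_of_nonneg_right _ (abs_nonneg _)
              rw [abs_le]
              constructor
              · have := hMin' t ht; simp only [hc]; linarith
              · have := hMax' t ht; simp only [hc]; linarith
        _ = (M - m)/2 * Y := by rw [intervalIntegral.integral_const_mul]
    have h2 : |(c - e) * y 1| ≤ (M - m)/2 * |y 1| := by
      rw [abs_mul]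
      exact mul_le_mul_of_nonneg_right he (abs_nonneg _)
    calc |(∫ t in (0:ℝ)..1, (x t - c) * v t) + (c - e) * y 1|
        ≤ |∫ t in (0:ℝ)..1, (x t - c) * v t| + |(c - e) * y 1| := abs_add_le _ _
      _ ≤ (M - m)/2 * Y + (M - m)/2 * |y 1| := add_le_add h1 h2
      _ = (M - m)/2 * (Y + |y 1|) := by ring
  -- z identities
  have hzint : (P - ∫ t in (0:ℝ)..1, y t * u t) / 2 = z 1 := by
    have hcont : ContinuousOn (fun t => (x t * v t - y t * u t) / 2) (Set.Icc 0 1) :=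
      ((hxc.mul hv).sub (hyc.mul hu)).div_const 2
    have := hftc z _ hcont (fun t ht => (hder t ht).2.2) 0 1 h0mem h1mem
    rw [hz0, sub_zero] at this
    rw [← this, intervalIntegral.integral_div, intervalIntegral.integral_sub hxv_int hyu_int]
  have hprod : ∫ t in (0:ℝ)..1, (u t * y t + x t * v t) = x 1 * y 1 := by
    have hcont : ContinuousOn (fun t => u t * y t + x t * v t) (Set.Icc 0 1) :=
      (hu.mul hyc).add (hxc.mul hv)
    have hD : ∀ t ∈ Set.Icc (0:ℝ) 1, HasDerivAt (fun t => x t * y t) (u t * y t + x t * v t) t :=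
      fun t ht => (hder t ht).1.mul (hder t ht).2.1
    have := hftc (fun t => x t * y t) _ hcont hD 0 1 h0mem h1mem
    simp only [hx0, zero_mul, sub_zero] at this
    exact this
  have hQP : (∫ t in (0:ℝ)..1, y t * u t) + P = x 1 * y 1 := by
    have : ∫ t in (0:ℝ)..1, (u t * y t + x t * v t)
        = (∫ t in (0:ℝ)..1, y t * u t) + P := by
      have hcomm : ∀ t, u t * y t + x t * v t = y t * u t + x t * v t := fun t => by ring
      simp only [hcomm]
      rw [intervalIntegral.integral_add hyu_int hxv_int]
    rw [← this, hprod]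
  have hz_plus : z 1 + x 1 * y 1 / 2 = P := by linarith
  have hz_minus : z 1 - x 1 * y 1 / 2 = P - x 1 * y 1 := by linarith
  -- combine
  have hc0 : |c - 0| ≤ (M - m)/2 := by
    rw [sub_zero, abs_le]; constructor <;> simp only [hc] <;> linarith
  have hc1 : |c - x 1| ≤ (M - m)/2 := by
    rw [abs_le]; constructor <;> simp only [hc] <;> linarith
  have hB1 : |z 1 + x 1 * y 1 / 2| ≤ (M - m)/2 * (Y + |y 1|) := by
    rw [hz_plus]
    have := key2 0 hc0
    simpa using this
  have hB2 : |z 1 - x 1 * y 1 / 2| ≤ (M - m)/2 * (Y + |y 1|) := by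
    rw [hz_minus]
    exact key2 (x 1) hc1
  have hmaxb : |z 1| + |x 1 * y 1| / 2 ≤ (M - m)/2 * (Y + |y 1|) := by
    have h := abs_add_abs_le_max (z 1) (x 1 * y 1 / 2)
    have habs2 : |x 1 * y 1 / 2| = |x 1 * y 1| / 2 := by
      rw [abs_div]; norm_num
    rw [habs2] at h
    exact le_trans h (max_le hB1 hB2)
  have hY1nn : 0 ≤ Y + |y 1| := by positivity
  have hchain : |z 1| + |x 1 * y 1| / 2 ≤ ((X + Y + |x 1| + |y 1|)/4)^2 := by
    have step1 : (M - m)/2 * (Y + |y 1|) ≤ (X + |x 1|)/4 * (Y + |y 1|) := by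
      apply mul_le_mul_of_nonneg_right _ hY1nn
      linarith
    have step2 : (X + |x 1|)/4 * (Y + |y 1|) ≤ ((X + Y + |x 1| + |y 1|)/4)^2 := by
      nlinarith [sq_nonneg ((X + |x 1|) - (Y + |y 1|))]
    linarith
  have hsqrt : Real.sqrt (|z 1| + |x 1 * y 1| / 2) ≤ (X + Y + |x 1| + |y 1|)/4 := by
    have h4 : (0:ℝ) ≤ (X + Y + |x 1| + |y 1|)/4 := by positivity
    calc Real.sqrt (|z 1| + |x 1 * y 1| / 2)
        ≤ Real.sqrt (((X + Y + |x 1| + |y 1|)/4)^2) := Real.sqrt_le_sqrt hchain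
      _ = (X + Y + |x 1| + |y 1|)/4 := Real.sqrt_sq h4
  have hLXY : ∫ t in (0:ℝ)..1, (|u t| + |v t|) = X + Y :=
    intervalIntegral.integral_add (hu_int 0 1 h0mem h1mem) (hv_int 0 1 h0mem h1mem)
  rw [hLXY]
  linarith



lemma hSet_negx (p q r : ℝ) : hSet (p, q, r) ⊆ hSet (-p, q, -r) := by
  rintro L ⟨x, y, z, u, v, hx0, hy0, hz0, hx1, hy1, hz1, hu, hv, hder, hL⟩
  refine ⟨fun t => -(x t), y, fun t => -(z t), fun t => -(u t), v,
    by simp [hx0], hy0, by simp [hz0], by simp [hx1], hy1, by simp [hz1], hu.neg, hv, ?_, ?_⟩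
  · intro t ht
    obtain ⟨h1, h2, h3⟩ := hder t ht
    refine ⟨h1.neg, h2, ?_⟩
    have := h3.neg
    refine this.congr_deriv (Eq.symm ?_)
    show (-x t * v t - y t * -(u t)) / 2 = -((x t * v t - y t * u t) / 2)
    ring
  · rw [hL]
    apply intervalIntegral.integral_congr
    intro t _
    simp [abs_neg]

lemma hSet_negy (p q r : ℝ) : hSet (p, q, r) ⊆ hSet (p, -q, -r) := by
  rintro L ⟨x, y, z, u, v, hx0, hy0, hz0, hx1, hy1, hz1, hu, hv, hder, hL⟩
  refine ⟨x, fun t => -(y t), fun t => -(z t), u, fun t => -(v t),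
    hx0, by simp [hy0], by simp [hz0], hx1, by simp [hy1], by simp [hz1], hu, hv.neg, ?_, ?_⟩
  · intro t ht
    obtain ⟨h1, h2, h3⟩ := hder t ht
    refine ⟨h1, h2.neg, ?_⟩
    have := h3.neg
    refine this.congr_deriv (Eq.symm ?_)
    show (x t * -(v t) - -(y t) * u t) / 2 = -((x t * v t - y t * u t) / 2)
    ring
  · rw [hL]
    apply intervalIntegral.integral_congr
    intro t _
    simp [abs_neg]

lemma hSet_swap (p q r : ℝ) : hSet (p, q, r) ⊆ hSet (q, p, -r) := by
  rintro L ⟨x, y, z, u, v, hx0, hy0, hz0, hx1, hy1, hz1, hu, hv, hder, hL⟩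
  refine ⟨y, x, fun t => -(z t), v, u,
    hy0, hx0, by simp [hz0], hy1, hx1, by simp [hz1], hv, hu, ?_, ?_⟩
  · intro t ht
    obtain ⟨h1, h2, h3⟩ := hder t ht
    refine ⟨h2, h1, ?_⟩
    have := h3.neg
    refine this.congr_deriv (Eq.symm ?_)
    show (y t * u t - x t * v t) / 2 = -((x t * v t - y t * u t) / 2)
    ring
  · rw [hL]
    apply intervalIntegral.integral_congr
    intro t _
    ring
lemma d3_negx (p q r : ℝ) : d3 (p, q, r) = d3 (-p, q, -r) := by
  rw [d3_hSet, d3_hSet]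
  congr 1
  refine Set.Subset.antisymm (hSet_negx p q r) ?_
  have := hSet_negx (-p) q (-r)
  simpa using this

lemma d3_negy (p q r : ℝ) : d3 (p, q, r) = d3 (p, -q, -r) := by
  rw [d3_hSet, d3_hSet]
  congr 1
  refine Set.Subset.antisymm (hSet_negy p q r) ?_
  have := hSet_negy p (-q) (-r)
  simpa using this

lemma d3_swap (p q r : ℝ) : d3 (p, q, r) = d3 (q, p, -r) := by
  rw [d3_hSet, d3_hSet]
  congr 1
  refine Set.Subset.antisymm (hSet_swap p q r) ?_
  have := hSet_swap q p (-r)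
  simpa using this

lemma d3_core (x y z : ℝ) (hx : 0 ≤ x) (hy : 0 ≤ y) (hz : 0 ≤ z)
    (h : max x y ^ 2 - x * y / 2 ≤ z) :
    d3 (x, y, z) = 4 * Real.sqrt (z + x * y / 2) - x - y := by
  have hzxy : 0 ≤ z + x * y / 2 := by positivity
  set s := Real.sqrt (z + x * y / 2) with hs
  have hs0 : 0 ≤ s := Real.sqrt_nonneg _
  have hs2 : s ^ 2 = z + x * y / 2 := Real.sq_sqrt hzxy
  have hsx : x ≤ s := by
    have h1 : x ^ 2 ≤ max x y ^ 2 := pow_le_pow_left₀ hx (le_max_left x y) 2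
    have h2 : x ^ 2 ≤ z + x * y / 2 := by linarith
    calc x = Real.sqrt (x ^ 2) := (Real.sqrt_sq hx).symm
      _ ≤ s := Real.sqrt_le_sqrt h2
  have hsy : y ≤ s := by
    have h1 : y ^ 2 ≤ max x y ^ 2 := pow_le_pow_left₀ hy (le_max_right x y) 2
    have h2 : y ^ 2 ≤ z + x * y / 2 := by linarith
    calc y = Real.sqrt (y ^ 2) := (Real.sqrt_sq hy).symm
      _ ≤ s := Real.sqrt_le_sqrt h2
  have hmem : (4 * s - x - y) ∈ hSet (x, y, z) :=
    mem_hSet_core x y z s hx hy hs0 hs2 hsx hsy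
  have hlb : ∀ L ∈ hSet (x, y, z), 4 * s - x - y ≤ L := by
    rintro L ⟨x', y', z', u, v, hx0, hy0, hz0, hx1, hy1, hz1, hu, hv, hder, hL⟩
    have hb := length_lower_bound x' y' z' u v hx0 hy0 hz0 hu hv hder
    simp only [hx1, hy1, hz1] at hb
    rw [abs_of_nonneg hz, abs_of_nonneg (mul_nonneg hx hy), abs_of_nonneg hx,
      abs_of_nonneg hy] at hb
    rw [hL, hs]
    exact hb
  rw [d3_hSet]
  apply le_antisymm
  · exact csInf_le ⟨4 * s - x - y, fun L hL => hlb L hL⟩ hmem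
  · exact le_csInf ⟨_, hmem⟩ hlb


/-- In the region `max{|x|,|y|}² − |xy|/2 ≤ |z|`, the subFinsler distance from
the identity in the Heisenberg group is `4√(|z| + |xy|/2) − |x| − |y|`. -/
theorem d3_eq_of_four_sided (x y z : ℝ)
    (h : max |x| |y| ^ 2 - |x * y| / 2 ≤ |z|) :
    d3 (x, y, z) = 4 * Real.sqrt (|z| + |x * y| / 2) - |x| - |y| := by
  rw [abs_mul] at h ⊢
  rcases le_or_gt 0 x with hx | hx <;> rcases le_or_gt 0 y with hy | hy <;>
    rcases le_or_gt 0 z with hz | hz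
  · -- (+,+,+)
    rw [abs_of_nonneg hx, abs_of_nonneg hy, abs_of_nonneg hz] at h ⊢
    rw [d3_core x y z hx hy hz (by linarith)]
  · -- (+,+,-)
    rw [abs_of_nonneg hx, abs_of_nonneg hy, abs_of_neg hz] at h ⊢
    rw [d3_swap x y z, d3_core y x (-z) hy hx (by linarith)
      (by rw [max_comm, mul_comm]; linarith)]
    rw [show -z + y * x / 2 = -z + x * y / 2 from by ring]
    ring
  · -- (+,-,+)
    rw [abs_of_nonneg hx, abs_of_neg hy, abs_of_nonneg hz] at h ⊢
    rw [d3_swap x y z, d3_negx y x (-z)]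
    simp only [neg_neg]
    rw [d3_core (-y) x z (by linarith) hx hz (by rw [max_comm, mul_comm]; linarith)]
    rw [show z + -y * x / 2 = z + x * -y / 2 from by ring]
    ring
  · -- (+,-,-)
    rw [abs_of_nonneg hx, abs_of_neg hy, abs_of_neg hz] at h ⊢
    rw [d3_negy x y z, d3_core x (-y) (-z) hx (by linarith) (by linarith) (by linarith)]
  · -- (-,+,+)
    rw [abs_of_neg hx, abs_of_nonneg hy, abs_of_nonneg hz] at h ⊢
    rw [d3_swap x y z, d3_negy y x (-z)]
    simp only [neg_neg]
    rw [d3_core y (-x) z hy (by linarith) hz (by rw [max_comm, mul_comm]; linarith)]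
    rw [show z + y * -x / 2 = z + -x * y / 2 from by ring]
    ring
  · -- (-,+,-)
    rw [abs_of_neg hx, abs_of_nonneg hy, abs_of_neg hz] at h ⊢
    rw [d3_negx x y z, d3_core (-x) y (-z) (by linarith) hy (by linarith) (by linarith)]
  · -- (-,-,+)
    rw [abs_of_neg hx, abs_of_neg hy, abs_of_nonneg hz] at h ⊢
    rw [d3_negx x y z, d3_negy (-x) y (-z)]
    simp only [neg_neg]
    rw [d3_core (-x) (-y) z (by linarith) (by linarith) hz (by linarith)]
  · -- (-,-,-)
    rw [abs_of_neg hx, abs_of_neg hy, abs_of_neg hz] at h ⊢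
    rw [d3_swap x y z, d3_negx y x (-z)]
    simp only [neg_neg]
    rw [d3_negy (-y) x z,
      d3_core (-y) (-x) (-z) (by linarith) (by linarith) (by linarith)
      (by rw [max_comm, mul_comm]; linarith)]
    rw [show -z + -y * -x / 2 = -z + -x * -y / 2 from by ring]
    ring
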